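/- Let x ≥ 0 be a real number and let r be a natural number with r·x < 1. Then (1 + x)^r ≤ 1 + rx + (rx)²/(1 − rx). -/

import Mathlib

/-- For `x ≥ 0` and `rx < 1`, `(1+x)^r ≤ 1 + rx + (rx)²/(1 − rx)`. -/
theorem stmt_14 (x : ℝ) (hx : 0 ≤ x) (r : ℕ) (hr : (r : ℝ) * x < 1) :
    (1 + x) ^ r ≤ 1 + (r : ℝ) * x + ((r : ℝ) * x) ^ 2 / (1 - (r : ℝ) * x) := by
  have h1 : 0 < 1 - (r : ℝ) * x := by linarith
  have hx1 : (0:ℝ) < 1 + x := by linarith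
  set u : ℝ := x / (1 + x) with hu
  have hu0 : 0 ≤ u := div_nonneg hx (le_of_lt hx1)
  have hux : u ≤ x := by
    rw [hu, div_le_iff₀ hx1]; nlinarith
  -- Bernoulli: 1 + r * (-u) ≤ (1 - u)^r
  have hb : 1 + (r : ℝ) * (-u) ≤ (1 + (-u)) ^ r := by
    apply one_add_mul_le_pow
    have : u ≤ 1 := by
      rw [hu, div_le_iff₀ hx1]; linarith
    linarith
  have h1u : 1 + (-u) = 1 / (1 + x) := by
    rw [hu]; field_simp; ring
  have hpow : (1 + x) ^ r * ((1 / (1 + x)) ^ r) = 1 := by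
    rw [← mul_pow]; field_simp; simp
  have hpos : (0:ℝ) ≤ (1 + x) ^ r := pow_nonneg (le_of_lt hx1) r
  have key : (1 + x) ^ r * (1 - (r : ℝ) * x) ≤ 1 := by
    have h2 : 1 - (r : ℝ) * x ≤ 1 + (r : ℝ) * (-u) := by
      have : (r : ℝ) * u ≤ (r : ℝ) * x :=
        mul_le_mul_of_nonneg_left hux (Nat.cast_nonneg r)
      linarith
    calc (1 + x) ^ r * (1 - (r : ℝ) * x)
        ≤ (1 + x) ^ r * (1 + (r : ℝ) * (-u)) :=
          mul_le_mul_of_nonneg_left h2 hpos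
      _ ≤ (1 + x) ^ r * ((1 + (-u)) ^ r) := mul_le_mul_of_nonneg_left hb hpos
      _ = 1 := by rw [h1u, hpow]
  have heq : 1 + (r : ℝ) * x + ((r : ℝ) * x) ^ 2 / (1 - (r : ℝ) * x)
      = 1 / (1 - (r : ℝ) * x) := by
    field_simp; ring
  rw [heq, le_div_iff₀ h1]
  exact key
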